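/- For every ε ∈ ℂ the element v_ε = ( !![0,ε; 0,0], !![0,ε; 0,0] ) lies in Z, and for all nonzero ε, ε' ∈ ℂ there exists h ∈ H with h · v_ε = v_{ε'}; that is, all the points v_ε with ε ≠ 0 lie in a single H-orbit. -/
import Mathlib


open Matrix

/-- The matrix `J = !![0,-1; 1,0]`. -/
def MJ : Matrix (Fin 2) (Fin 2) ℂ := !![0, -1; 1, 0]

/-- The matrix `T = !![0,1; 1,0]`. -/
def MT : Matrix (Fin 2) (Fin 2) ℂ := !![0, 1; 1, 0]

/-- The variety `Z` of pairs of 2×2 matrices. -/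
def Z : Set (Matrix (Fin 2) (Fin 2) ℂ × Matrix (Fin 2) (Fin 2) ℂ) :=
  {p | p.1.det = 0 ∧ p.2.det = 0 ∧ p.1 * MJ * p.2ᵀ = 0 ∧ p.2ᵀ * MT * p.1 = 0}

/-- For `g = !![a,b; c,d]` with determinant `Δ`, `g* = Δ⁻¹ • !![a,-b; -c,d]`. -/
noncomputable def gstar (g : Matrix (Fin 2) (Fin 2) ℂ) : Matrix (Fin 2) (Fin 2) ℂ :=
  (g.det)⁻¹ • !![g 0 0, -(g 0 1); -(g 1 0), g 1 1]

/-- The group `H = SL₂(ℂ) × GL₂(ℂ) × ℂˣ`. -/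
abbrev H := Matrix.SpecialLinearGroup (Fin 2) ℂ × GL (Fin 2) ℂ × ℂˣ

/-- The action `(h₁,h₂,z)·(B₁,B₂) = (z · h₂* · B₁ · h₁⁻¹, h₂ · B₂ · h₁⁻¹)`. -/
noncomputable def act (h : H) (v : Matrix (Fin 2) (Fin 2) ℂ × Matrix (Fin 2) (Fin 2) ℂ) :
    Matrix (Fin 2) (Fin 2) ℂ × Matrix (Fin 2) (Fin 2) ℂ :=
  ((h.2.2 : ℂ) • (gstar (h.2.1 : Matrix (Fin 2) (Fin 2) ℂ) * v.1 *
      ((h.1⁻¹ : Matrix.SpecialLinearGroup (Fin 2) ℂ) : Matrix (Fin 2) (Fin 2) ℂ)),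
    (h.2.1 : Matrix (Fin 2) (Fin 2) ℂ) * v.2 *
      ((h.1⁻¹ : Matrix.SpecialLinearGroup (Fin 2) ℂ) : Matrix (Fin 2) (Fin 2) ℂ))

/-- The element `v_ε = ( !![0,ε; 0,0], !![0,ε; 0,0] )`. -/
def veps (ε : ℂ) : Matrix (Fin 2) (Fin 2) ℂ × Matrix (Fin 2) (Fin 2) ℂ :=
  (!![0, ε; 0, 0], !![0, ε; 0, 0])

theorem stmt4 :
    (∀ ε : ℂ, veps ε ∈ Z) ∧
    (∀ ε ε' : ℂ, ε ≠ 0 → ε' ≠ 0 → ∃ h : H, act h (veps ε) = veps ε') := by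
  constructor
  · intro ε
    refine ⟨?_, ?_, ?_, ?_⟩
    · simp [veps, Matrix.det_fin_two_of]
    · simp [veps, Matrix.det_fin_two_of]
    · ext i j
      fin_cases i <;> fin_cases j <;>
        simp [veps, MJ, MT, Matrix.mul_apply, Fin.sum_univ_two, Matrix.transpose_apply,
          Matrix.vecHead, Matrix.transpose]
    · ext i j
      fin_cases i <;> fin_cases j <;>
        simp [veps, MJ, MT, Matrix.mul_apply, Fin.sum_univ_two, Matrix.transpose_apply,
          Matrix.vecHead, Matrix.transpose]
  · intro ε ε' hε hε'
    set a : ℂ := ε' / ε with ha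
    have ha0 : a ≠ 0 := div_ne_zero hε' hε
    have hdet : (!![a, 0; 0, 1] : Matrix (Fin 2) (Fin 2) ℂ).det = a := by
      simp [Matrix.det_fin_two_of]
    have hmul : (!![a, 0; 0, 1] : Matrix (Fin 2) (Fin 2) ℂ) * !![a⁻¹, 0; 0, 1] = 1 := by
      ext i j
      fin_cases i <;> fin_cases j <;>
        simp [Matrix.mul_apply, Fin.sum_univ_two, mul_inv_cancel₀ ha0]
    have hmul' : (!![a⁻¹, 0; 0, 1] : Matrix (Fin 2) (Fin 2) ℂ) * !![a, 0; 0, 1] = 1 := by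
      ext i j
      fin_cases i <;> fin_cases j <;>
        simp [Matrix.mul_apply, Fin.sum_univ_two, inv_mul_cancel₀ ha0]
    refine ⟨(1, ⟨!![a, 0; 0, 1], !![a⁻¹, 0; 0, 1], hmul, hmul'⟩,
      Units.mk0 a ha0), ?_⟩
    simp only [act, veps, Prod.mk.injEq]
    constructor
    · ext i j
      fin_cases i <;> fin_cases j <;>
        · simp [gstar, hdet, Matrix.mul_apply, Fin.sum_univ_two, ha]
          try field_simp
          try ring
    · ext i j
      fin_cases i <;> fin_cases j <;>
        · simp [Matrix.mul_apply, Fin.sum_univ_two, ha]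
          try field_simp
          try ring
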